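/- Let N and K be positive integers with 1 ≤ K ≤ N, and let P(n) = (C(N-n+1, K)/C(N, K)) · (K/(N-n+1)). Then the expected number of draws until the first success satisfies ∑_{n=1}^{N-K+1} n · P(n) = (N+1)/(K+1). -/

import Mathlib

open Finset

lemma key (k M : ℕ) :
    ∑ j ∈ Finset.range (M+1), (M+1-j) * (k+j).choose k = (k+2+M).choose (k+2) := by
  induction M with
  | zero => simp
  | succ M ih =>
    have h : ∀ j ∈ Finset.range (M+2), (M+1+1-j) * (k+j).choose k
        = (M+1-j) * (k+j).choose k + (k+j).choose k := by
      intro j hj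
      simp only [Finset.mem_range] at hj
      rcases Nat.lt_or_ge j (M+1) with h | h
      · have : M+1+1-j = (M+1-j) + 1 := by omega
        rw [this, Nat.add_mul, one_mul]
      · have hj' : j = M+1 := by omega
        subst hj'; simp
    rw [Finset.sum_congr rfl h, Finset.sum_add_distrib,
      Finset.sum_range_succ (fun j => (M+1-j) * (k+j).choose k)]
    simp only [Nat.sub_self, zero_mul, add_zero]
    rw [ih]
    have hock : ∑ j ∈ Finset.range (M+2), (k+j).choose k
        = (k+M+2).choose (k+1) := by
      have := Finset.sum_Ico_eq_sum_range (f := fun i => i.choose k) (m := k) (n := k+M+2)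
      have h2 : k + M + 2 - k = M + 2 := by omega
      rw [h2] at this
      rw [← this, (by exact Finset.Ico_add_one_right_eq_Icc k (k+M+1) : Finset.Ico k (k+M+2) = Finset.Icc k (k+M+1)), Nat.sum_Icc_choose]
    rw [hock]
    have : (k+2+(M+1)).choose (k+2) = (k+M+2).choose (k+1) + (k+M+2).choose (k+2) := by
      have := Nat.choose_succ_succ (k+M+2) (k+1)
      have he : k+2+(M+1) = k+M+2+1 := by omega
      rw [he, this]
    rw [this]
    have he2 : k+2+M = k+M+2 := by omega
    rw [he2, Nat.add_comm]

lemma natsum (N K : ℕ) (hK : 1 ≤ K) (hKN : K ≤ N) :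
    ∑ n ∈ Finset.Icc 1 (N - K + 1), n * (N - n).choose (K-1)
      = (N+1).choose (K+1) := by
  rw [← Finset.Ico_add_one_right_eq_Icc, Finset.sum_Ico_eq_sum_range]
  have h2 : N - K + 1 + 1 - 1 = (N - K) + 1 := by omega
  rw [h2, ← Finset.sum_range_reflect]
  have h3 : ∀ j ∈ Finset.range (N - K + 1),
      (1 + (N - K + 1 - 1 - j)) * (N - (1 + (N - K + 1 - 1 - j))).choose (K-1)
      = (N - K + 1 - j) * ((K-1) + j).choose (K-1) := by
    intro j hj
    simp only [Finset.mem_range] at hj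
    have e1 : 1 + (N - K + 1 - 1 - j) = N - K + 1 - j := by omega
    have e2 : N - (N - K + 1 - j) = (K - 1) + j := by omega
    rw [e1, e2]
  rw [Finset.sum_congr rfl h3]
  have := key (K-1) (N-K)
  have e4 : K - 1 + 2 + (N - K) = N + 1 := by omega
  have e5 : K - 1 + 2 = K + 1 := by omega
  rw [e4, e5] at this
  convert this using 2

theorem expected_value_eq (N K : ℕ) (hK : 1 ≤ K) (hKN : K ≤ N) :
    ∑ n ∈ Finset.Icc 1 (N - K + 1),
      (n : ℚ) * ((((N - n + 1).choose K : ℚ) / (N.choose K : ℚ)) * ((K : ℚ) / ((N - n + 1 : ℕ) : ℚ)))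
      = ((N : ℚ) + 1) / ((K : ℚ) + 1) := by
  have hD : (N.choose K : ℚ) ≠ 0 := by
    have := Nat.choose_pos hKN
    positivity
  have hterm : ∀ n ∈ Finset.Icc 1 (N-K+1),
      (n : ℚ) * ((((N - n + 1).choose K : ℚ) / (N.choose K : ℚ)) * ((K : ℚ) / ((N - n + 1 : ℕ) : ℚ)))
      = ((n * (N - n).choose (K-1) : ℕ) : ℚ) / (N.choose K : ℚ) := by
    intro n hn
    have hm : ((N - n + 1 : ℕ) : ℚ) ≠ 0 := by positivity
    have hid : (N - n + 1) * (N - n).choose (K-1) = (N - n + 1).choose K * K := by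
      have h := Nat.add_one_mul_choose_eq (N - n) (K-1)
      have hK' : K - 1 + 1 = K := by omega
      simpa [Nat.succ_eq_add_one, hK'] using h
    have hidQ : ((N - n + 1 : ℕ) : ℚ) * ((N - n).choose (K-1) : ℚ)
        = ((N - n + 1).choose K : ℚ) * (K : ℚ) := by exact_mod_cast hid
    push_cast at hidQ ⊢
    field_simp
    linear_combination (-(↑n)) * hidQ
  rw [Finset.sum_congr rfl hterm, ← Finset.sum_div, ← Nat.cast_sum,
    natsum N K hK hKN]
  have hid2 : (N + 1) * N.choose K = (N+1).choose (K+1) * (K+1) :=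
    Nat.add_one_mul_choose_eq N K
  have hid2Q : ((N : ℚ) + 1) * (N.choose K : ℚ)
      = ((N+1).choose (K+1) : ℚ) * ((K : ℚ) + 1) := by exact_mod_cast hid2
  have hK1 : ((K : ℚ) + 1) ≠ 0 := by positivity
  field_simp
  nlinarith [hid2Q]
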